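/- arXiv:1306.1174 — 2 statements merged into one kernel-verified Lean document; each statement's English description precedes it below -/
import Mathlib

section
/- Let T be a complete strongly minimal theory with infinite models and let r_0 be the unique complete 1-type over ∅ all of whose formulas have infinitely many solutions in every model of T. Then r_0 is isolated (principal) if and only if S^1_T(∅) is finite. -/
open FirstOrder FirstOrder.Language Set

universe u v

variable {L : FirstOrder.Language.{u, v}}

/-- `p` is a complete 1-type of `T` over `∅`: a maximal `T`-consistent (i.e. realized in some
model of `T`) set of `L`-formulas in one free variable without parameters. -/
def IsCompleteOneType (T : L.Theory) (p : Set (L.Formula (Fin 1))) : Prop :=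
  (∃ (M : Theory.ModelType.{u, v, max u v} T) (b : M), ∀ φ ∈ p, φ.Realize ![b]) ∧
    ∀ φ : L.Formula (Fin 1), φ ∈ p ∨ φ.not ∈ p

/-- `b` realizes the 1-type `p`: `b` satisfies every formula of `p`. -/
def RealizesOneType (L : FirstOrder.Language.{u, v}) {M : Type w} [L.Structure M]
    (p : Set (L.Formula (Fin 1))) (b : M) : Prop :=
  ∀ φ ∈ p, φ.Realize ![b]

/-- `T` is strongly minimal: in every model `M` of `T`, for every formula `φ(x, ȳ)` and every
tuple `ā` of parameters from `M`, the set `{b ∈ M : M ⊨ φ(b, ā)}` is finite or cofinite. -/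
def IsStronglyMinimal (T : L.Theory) : Prop :=
  ∀ (M : Theory.ModelType.{u, v, max u v} T) (n : ℕ)
    (φ : L.Formula (Fin 1 ⊕ Fin n)) (a : Fin n → M),
    {b : M | φ.Realize (Sum.elim ![b] a)}.Finite ∨
      {b : M | ¬ φ.Realize (Sum.elim ![b] a)}.Finite

/-- A 1-type `q` is isolated (principal): there is a formula `θ(x)` consistent with `T`
such that `T ⊨ ∀x (θ(x) → ψ(x))` for every `ψ ∈ q`. -/
def IsIsolatedType (T : L.Theory) (q : Set (L.Formula (Fin 1))) : Prop :=
  ∃ θ : L.Formula (Fin 1),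
    (∃ (M : Theory.ModelType.{u, v, max u v} T) (b : M), θ.Realize ![b]) ∧
      ∀ ψ ∈ q, ∀ (M : Theory.ModelType.{u, v, max u v} T) (b : M),
        θ.Realize ![b] → ψ.Realize ![b]

/-- `b` is semi-isolated over `a`: there is a parameter-free formula `φ(x, y)` with
`M ⊨ φ(a, b)` such that every `b'` with `M ⊨ φ(a, b')` realizes the complete type of `b`
over `∅`. -/
def SemiIsolatedOver (L : FirstOrder.Language.{u, v}) {M : Type w} [L.Structure M]
    (a b : M) : Prop :=
  ∃ φ : L.Formula (Fin 2), φ.Realize ![a, b] ∧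
    ∀ b' : M, φ.Realize ![a, b'] →
      ∀ ψ : L.Formula (Fin 1), ψ.Realize ![b] → ψ.Realize ![b']


section AuxiliaryLemmas

universe w

lemma vecEta {M : Type w} (i : Fin 1 → M) : ![i 0] = i := by
  funext j; fin_cases j; rfl

/-- The sentence `∀ x, σ(x) → ψ(x)`. -/
noncomputable def allImpSent (σ ψ : L.Formula (Fin 1)) : L.Sentence :=
  Formula.iAlls (Fin 1) ((σ.imp ψ).relabel (Sum.inr : Fin 1 → Empty ⊕ Fin 1))

/-- The sentence `∃ x, σ(x)`. -/
noncomputable def exSent (σ : L.Formula (Fin 1)) : L.Sentence :=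
  Formula.iExs (Fin 1) (σ.relabel (Sum.inr : Fin 1 → Empty ⊕ Fin 1))

lemma realize_allImpSent {M : Type w} [L.Structure M] {σ ψ : L.Formula (Fin 1)} :
    M ⊨ allImpSent σ ψ ↔ ∀ b : M, σ.Realize ![b] → ψ.Realize ![b] := by
  rw [allImpSent, Sentence.Realize, Formula.realize_iAlls]
  simp only [Formula.realize_relabel, Function.comp_def, Sum.elim_inr]
  constructor
  · intro h b
    have := h ![b]
    rwa [Formula.realize_imp] at this
  · intro h i
    have := h (i 0)
    rw [Formula.realize_imp]
    rw [vecEta i] at this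
    exact this

lemma realize_exSent {M : Type w} [L.Structure M] {σ : L.Formula (Fin 1)} :
    M ⊨ exSent σ ↔ ∃ b : M, σ.Realize ![b] := by
  rw [exSent, Sentence.Realize, Formula.realize_iExs]
  simp only [Formula.realize_relabel, Function.comp_def, Sum.elim_inr]
  constructor
  · rintro ⟨i, hi⟩
    exact ⟨i 0, by rwa [vecEta i]⟩
  · rintro ⟨b, hb⟩
    exact ⟨![b], hb⟩

lemma sentenceTransfer {T : L.Theory} (hc : T.IsComplete)
    (M N : Theory.ModelType.{u, v, w} T) {s : L.Sentence} (h : M ⊨ s) : N ⊨ s :=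
  (hc.realize_sentence_iff s N).2 ((hc.realize_sentence_iff s M).1 h)

lemma typeEqOfCommon {p q : Set (L.Formula (Fin 1))}
    (hp : ∀ φ : L.Formula (Fin 1), φ ∈ p ∨ φ.not ∈ p)
    (hq : ∀ φ : L.Formula (Fin 1), φ ∈ q ∨ φ.not ∈ q)
    {M : Type w} [L.Structure M] {c : M}
    (hcp : ∀ φ ∈ p, φ.Realize ![c]) (hcq : ∀ φ ∈ q, φ.Realize ![c]) : p = q := by
  ext φ
  constructor
  · intro h
    rcases hq φ with h' | h'
    · exact h'
    · exact absurd (hcp φ h) (Formula.realize_not.1 (hcq _ h'))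
  · intro h
    rcases hp φ with h' | h'
    · exact h'
    · exact absurd (hcq φ h) (Formula.realize_not.1 (hcp _ h'))

lemma cofiniteOfInfinite {T : L.Theory} (hsm : IsStronglyMinimal T)
    (M : Theory.ModelType.{u, v, max u v} T) (θ : L.Formula (Fin 1))
    (h : {b : M | θ.Realize ![b]}.Infinite) : {b : M | ¬ θ.Realize ![b]}.Finite := by
  have hset : {b : M |
      (θ.relabel (Sum.inl : Fin 1 → Fin 1 ⊕ Fin 0)).Realize (Sum.elim ![b] finZeroElim)}
        = {b : M | θ.Realize ![b]} := by
    ext b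
    rw [Set.mem_setOf_eq, Set.mem_setOf_eq, Formula.realize_relabel, Sum.elim_comp_inl]
  have hset' : {b : M |
      ¬ (θ.relabel (Sum.inl : Fin 1 → Fin 1 ⊕ Fin 0)).Realize (Sum.elim ![b] finZeroElim)}
        = {b : M | ¬ θ.Realize ![b]} := by
    ext b
    rw [Set.mem_setOf_eq, Set.mem_setOf_eq, Formula.realize_relabel, Sum.elim_comp_inl]
  rcases hsm M 0 (θ.relabel Sum.inl) finZeroElim with h' | h'
  · rw [hset] at h'
    exact absurd h' h
  · rwa [hset'] at h'

end AuxiliaryLemmas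

/-- In a complete strongly minimal theory, `r₀` is isolated iff `S¹_T(∅)` is finite. -/
theorem statement4 (T : L.Theory) (hcomplete : T.IsComplete)
    (hinf : ∀ M : Theory.ModelType.{u, v, max u v} T, Infinite M)
    (hsm : IsStronglyMinimal T)
    (r0 : Set (L.Formula (Fin 1))) (hr0 : IsCompleteOneType T r0)
    (hr0inf : ∀ φ ∈ r0, ∀ M : Theory.ModelType.{u, v, max u v} T,
      {b : M | φ.Realize ![b]}.Infinite) :
    IsIsolatedType T r0 ↔
      {p : Set (L.Formula (Fin 1)) | IsCompleteOneType T p}.Finite := by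
  classical
  constructor
  · rintro ⟨θ, ⟨M0, b0, hb0⟩, hθ⟩
    have hb0r0 : ∀ ψ ∈ r0, ψ.Realize ![b0] := fun ψ hψ => hθ ψ hψ M0 b0 hb0
    have hθr0 : θ ∈ r0 := by
      rcases hr0.2 θ with h | h
      · exact h
      · exact absurd hb0 (Formula.realize_not.1 (hb0r0 _ h))
    have hF : {b : M0 | ¬ θ.Realize ![b]}.Finite :=
      cofiniteOfInfinite hsm M0 θ (hr0inf θ hθr0 M0)
    have key : ∀ p : Set (L.Formula (Fin 1)), ∃ c : M0,
        (IsCompleteOneType T p ∧ p ≠ r0) →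
          ((¬ θ.Realize ![c]) ∧ ∀ ψ ∈ p, ψ.Realize ![c]) := by
      intro p
      by_cases hp : IsCompleteOneType T p ∧ p ≠ r0
      swap
      · exact ⟨Classical.arbitrary M0, fun h => absurd h hp⟩
      obtain ⟨⟨⟨N, b, hb⟩, hpmax⟩, hpne⟩ := hp
      have hθnp : θ.not ∈ p := by
        rcases hpmax θ with h | h
        · exfalso
          apply hpne
          have hbθ : θ.Realize ![b] := hb θ h
          have hbr0 : ∀ ψ ∈ r0, ψ.Realize ![b] := fun ψ hψ => hθ ψ hψ N b hbθ
          exact typeEqOfCommon hpmax hr0.2 hb hbr0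
        · exact h
      have hfinN : {c : N | θ.not.Realize ![c]}.Finite := by
        have h1 := cofiniteOfInfinite hsm N θ (hr0inf θ hθr0 N)
        have : {c : N | θ.not.Realize ![c]} = {c : N | ¬ θ.Realize ![c]} := by
          ext c
          rw [Set.mem_setOf_eq, Set.mem_setOf_eq, Formula.realize_not]
        rwa [this]
      have hPex : ∃ n, ∃ χ : L.Formula (Fin 1), χ.Realize ![b] ∧
          {c : N | χ.Realize ![c]}.Finite ∧ {c : N | χ.Realize ![c]}.ncard = n :=
        ⟨_, θ.not, hb _ hθnp, hfinN, rfl⟩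
      obtain ⟨σ, hσb, hσfin, hσcard⟩ := Nat.find_spec hPex
      have hσmin : ∀ ψ ∈ p, ∀ c : N, σ.Realize ![c] → ψ.Realize ![c] := by
        intro ψ hψ c hc
        by_contra hcψ
        have hsub : {c : N | (σ ⊓ ψ).Realize ![c]} ⊆ {c : N | σ.Realize ![c]} :=
          fun x hx => (Formula.realize_inf.1 hx).1
        have hss : {c : N | (σ ⊓ ψ).Realize ![c]} ⊂ {c : N | σ.Realize ![c]} := by
          refine ⟨hsub, fun hsub' => ?_⟩
          exact hcψ (Formula.realize_inf.1 (hsub' hc)).2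
        have hlt : {c : N | (σ ⊓ ψ).Realize ![c]}.ncard < Nat.find hPex := by
          rw [← hσcard]
          exact Set.ncard_lt_ncard hss hσfin
        exact Nat.find_min hPex hlt ⟨σ ⊓ ψ, Formula.realize_inf.2 ⟨hσb, hb ψ hψ⟩,
          hσfin.subset hsub, rfl⟩
      have hex : (M0 : Type (max u v)) ⊨ exSent σ :=
        sentenceTransfer hcomplete N M0 (realize_exSent.2 ⟨b, hσb⟩)
      obtain ⟨c, hcσ⟩ := realize_exSent.1 hex
      refine ⟨c, fun _ => ⟨?_, ?_⟩⟩
      · have h1 := realize_allImpSent.1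
          (sentenceTransfer hcomplete N M0 (realize_allImpSent.2 (hσmin θ.not hθnp))) c hcσ
        exact Formula.realize_not.1 h1
      · intro ψ hψ
        exact realize_allImpSent.1
          (sentenceTransfer hcomplete N M0 (realize_allImpSent.2 (hσmin ψ hψ))) c hcσ
    choose g hg using key
    have hsub : {p : Set (L.Formula (Fin 1)) | IsCompleteOneType T p} ⊆
        insert r0 {p : Set (L.Formula (Fin 1)) | IsCompleteOneType T p ∧ p ≠ r0} := by
      intro p hp
      by_cases h : p = r0
      · exact Set.mem_insert_iff.2 (Or.inl h)
      · exact Set.mem_insert_iff.2 (Or.inr ⟨hp, h⟩)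
    refine Set.Finite.subset (Set.Finite.insert r0 ?_) hsub
    have hinj : Set.InjOn g {p : Set (L.Formula (Fin 1)) | IsCompleteOneType T p ∧ p ≠ r0} := by
      intro p1 hp1 p2 hp2 he
      obtain ⟨_, h1⟩ := hg p1 hp1
      obtain ⟨_, h2⟩ := hg p2 hp2
      rw [← he] at h2
      exact typeEqOfCommon hp1.1.2 hp2.1.2 h1 h2
    apply Set.Finite.of_finite_image _ hinj
    apply hF.subset
    rintro _ ⟨p, hp, rfl⟩
    exact (hg p hp).1
  · intro hfin
    obtain ⟨Mr, br, hbr⟩ := hr0.1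
    have hchoice : ∀ p : Set (L.Formula (Fin 1)), ∃ φ : L.Formula (Fin 1),
        (IsCompleteOneType T p ∧ p ≠ r0) → (φ ∈ r0 ∧ φ.not ∈ p) := by
      intro p
      by_cases hp : IsCompleteOneType T p ∧ p ≠ r0
      swap
      · exact ⟨⊤, fun h => absurd h hp⟩
      obtain ⟨⟨⟨N, b, hb⟩, hpmax⟩, hpne⟩ := hp
      have : ∃ φ : L.Formula (Fin 1), φ ∈ r0 ∧ φ.not ∈ p := by
        by_contra hcon
        push_neg at hcon
        apply hpne
        have hsub : r0 ⊆ p := fun φ hφ => (hpmax φ).resolve_right (hcon φ hφ)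
        ext φ
        constructor
        · intro hφ
          rcases hr0.2 φ with h | h
          · exact h
          · exact absurd (hb _ hφ) (Formula.realize_not.1 (hb _ (hsub h)))
        · intro hφ
          exact hsub hφ
      obtain ⟨φ, h1, h2⟩ := this
      exact ⟨φ, fun _ => ⟨h1, h2⟩⟩
    choose f hf using hchoice
    refine ⟨BoundedFormula.iInf (fun p : (hfin.toFinset.erase r0) => f p), ⟨Mr, br, ?_⟩, ?_⟩
    · rw [Formula.Realize, BoundedFormula.realize_iInf, Subtype.forall]
      intro p hp
      rw [Finset.mem_erase, Set.Finite.mem_toFinset] at hp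
      exact hbr _ (hf p ⟨hp.2, hp.1⟩).1
    · intro ψ hψ M b hθb
      have htpc : IsCompleteOneType T {φ : L.Formula (Fin 1) | φ.Realize ![b]} :=
        ⟨⟨M, b, fun φ h => h⟩,
          fun φ => (em (φ.Realize ![b])).imp id Formula.realize_not.2⟩
      have htpr0 : {φ : L.Formula (Fin 1) | φ.Realize ![b]} = r0 := by
        by_contra hne
        have hmem : {φ : L.Formula (Fin 1) | φ.Realize ![b]} ∈ hfin.toFinset.erase r0 :=
          Finset.mem_erase.2 ⟨hne, hfin.mem_toFinset.2 htpc⟩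
        rw [Formula.Realize, BoundedFormula.realize_iInf, Subtype.forall] at hθb
        have h1 := hθb _ hmem
        have h2 := (hf _ ⟨htpc, hne⟩).2
        exact Formula.realize_not.1 h2 h1
      rw [← htpr0] at hψ
      exact hψ
end

section
/- Let T be a complete strongly minimal theory with infinite models such that S^1_T(∅) is infinite, and let r_0 be the unique complete 1-type over ∅ all of whose formulas have infinitely many solutions in every model of T (so r_0 is non-isolated). Let M be a model of T and let a, b ∈ M both realize r_0. If b is semi-isolated over a, then a is semi-isolated over b; that is, the semi-isolation relation on the set of realizations of r_0 is symmetric. -/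
open FirstOrder FirstOrder.Language Set

universe u v

variable {L : FirstOrder.Language.{u, v}}

universe w

section Helpers

/-- conjunction over a finset (the old `BoundedFormula.iInf` interface) -/
noncomputable def finsetInf {α β : Type*} {n : ℕ} (s : Finset β) (f : β → L.BoundedFormula α n) :
    L.BoundedFormula α n :=
  BoundedFormula.iInf (fun b : s => f b)

lemma realize_finsetInf {α β : Type*} {n : ℕ} {M : Type*} [L.Structure M] (s : Finset β)
    (f : β → L.BoundedFormula α n) (v : α → M) (v' : Fin n → M) :
    (finsetInf s f).Realize v v' ↔ ∀ b ∈ s, (f b).Realize v v' := by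
  unfold finsetInf
  rw [BoundedFormula.realize_iInf]
  exact ⟨fun h b hb => h ⟨b, hb⟩, fun h b => h b.1 b.2⟩

lemma vec_one {α : Type*} (f : Fin 1 → α) : f = ![f 0] := by
  funext i; fin_cases i; rfl

lemma comp_swap2 {α : Type*} (u v : α) :
    (![u, v] : Fin 2 → α) ∘ (![1, 0] : Fin 2 → Fin 2) = ![v, u] := by
  funext i; fin_cases i <;> rfl

lemma comp_const0 {α : Type*} (u v : α) :
    (![u, v] : Fin 2 → α) ∘ (fun _ : Fin 1 => (0 : Fin 2)) = ![u] := by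
  funext i; fin_cases i; rfl

lemma comp_const1 {α : Type*} (u v : α) :
    (![u, v] : Fin 2 → α) ∘ (fun _ : Fin 1 => (1 : Fin 2)) = ![v] := by
  funext i; fin_cases i; rfl

lemma comp_pair {α : Type*} {k : ℕ} (x : α) (ys : Fin k → α) (i : Fin k) :
    Sum.elim ![x] ys ∘ (![Sum.inl 0, Sum.inr i] : Fin 2 → Fin 1 ⊕ Fin k) = ![x, ys i] := by
  funext j; fin_cases j <;> rfl

/-- the formula (in one free variable `x`) asserting that there are at least `k`
distinct `y` with `φ(x,y)`. -/
noncomputable def countGe (k : ℕ) (φ : L.Formula (Fin 2)) : L.Formula (Fin 1) :=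
  Formula.iExs (Fin k)
    ((finsetInf (Finset.univ : Finset (Fin k))
        (fun i => φ.relabel ![Sum.inl 0, Sum.inr i])) ⊓
      (finsetInf (Finset.univ : Finset (Fin k × Fin k))
        (fun p => if p.1 = p.2 then ⊤ else
          (Term.equal (Term.var (Sum.inr p.1)) (Term.var (Sum.inr p.2))).not)))

lemma realize_countGe {M : Type w} [L.Structure M] {k : ℕ} {φ : L.Formula (Fin 2)} {x : M} :
    (countGe k φ).Realize ![x] ↔
      ∃ ys : Fin k → M, Function.Injective ys ∧ ∀ i, φ.Realize ![x, ys i] := by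
  unfold countGe
  rw [Formula.realize_iExs]
  refine exists_congr fun ys => ?_
  have h1 : ∀ a, Sum.elim ![x] ys (id a) = Sum.elim ![x] ys a := fun _ => rfl
  constructor
  · intro h
    have h' : (((finsetInf (Finset.univ : Finset (Fin k))
        (fun i => φ.relabel ![Sum.inl 0, Sum.inr i])) ⊓
      (finsetInf (Finset.univ : Finset (Fin k × Fin k))
        (fun p => if p.1 = p.2 then ⊤ else
          (Term.equal (Term.var (Sum.inr p.1)) (Term.var (Sum.inr p.2))).not))) :
          L.Formula (Fin 1 ⊕ Fin k)).Realize (Sum.elim ![x] ys) := h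
    rw [Formula.realize_inf] at h'
    obtain ⟨hA, hB⟩ := h'
    have hA' := (realize_finsetInf _ _ _ _).1 hA
    have hB' := (realize_finsetInf _ _ _ _).1 hB
    constructor
    · intro i j hij
      by_contra hne
      have := hB' (i, j) (Finset.mem_univ _)
      rw [if_neg hne] at this
      rw [BoundedFormula.realize_not] at this
      exact this hij
    · intro i
      have := hA' i (Finset.mem_univ _)
      have : (φ.relabel ![Sum.inl 0, Sum.inr i]).Realize (Sum.elim ![x] ys) := this
      rw [Formula.realize_relabel, comp_pair] at this
      exact this
  · rintro ⟨hinj, hall⟩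
    show (((finsetInf (Finset.univ : Finset (Fin k))
        (fun i => φ.relabel ![Sum.inl 0, Sum.inr i])) ⊓
      (finsetInf (Finset.univ : Finset (Fin k × Fin k))
        (fun p => if p.1 = p.2 then ⊤ else
          (Term.equal (Term.var (Sum.inr p.1)) (Term.var (Sum.inr p.2))).not))) :
          L.Formula (Fin 1 ⊕ Fin k)).Realize (Sum.elim ![x] ys)
    rw [Formula.realize_inf]
    constructor
    · refine (realize_finsetInf _ _ _ _).2 fun i _ => ?_
      show (φ.relabel ![Sum.inl 0, Sum.inr i]).Realize (Sum.elim ![x] ys)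
      rw [Formula.realize_relabel, comp_pair]
      exact hall i
    · refine (realize_finsetInf _ _ _ _).2 fun p _ => ?_
      by_cases hp : p.1 = p.2
      · rw [if_pos hp]; exact (BoundedFormula.realize_top).2 trivial
      · rw [if_neg hp]
        rw [BoundedFormula.realize_not]
        intro hEq
        exact hp (hinj hEq)

end Helpers

section Helpers2

/-- membership in a complete type equals realization by any of its realizers -/
lemma mem_iff_realize {p : Set (L.Formula (Fin 1))}
    (h2 : ∀ φ : L.Formula (Fin 1), φ ∈ p ∨ φ.not ∈ p)
    {M : Type w} [L.Structure M] {c : M} (hc : ∀ φ ∈ p, φ.Realize ![c])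
    (ψ : L.Formula (Fin 1)) : ψ ∈ p ↔ ψ.Realize ![c] := by
  constructor
  · exact fun h => hc ψ h
  · intro h
    rcases h2 ψ with h' | h'
    · exact h'
    · exact absurd h (Formula.realize_not.1 (hc _ h'))

/-- a separating formula for realizers of distinct complete types -/
lemma exists_sep {p q : Set (L.Formula (Fin 1))}
    (hp2 : ∀ φ : L.Formula (Fin 1), φ ∈ p ∨ φ.not ∈ p)
    (hq2 : ∀ φ : L.Formula (Fin 1), φ ∈ q ∨ φ.not ∈ q)
    {Mp : Type w} [L.Structure Mp] {cp : Mp} (hcp : ∀ φ ∈ p, φ.Realize ![cp])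
    {Mq : Type*} [L.Structure Mq] {cq : Mq} (hcq : ∀ φ ∈ q, φ.Realize ![cq])
    (hne : p ≠ q) :
    ∃ γ : L.Formula (Fin 1), γ.Realize ![cp] ∧ ¬ γ.Realize ![cq] := by
  by_contra h
  push_neg at h
  apply hne
  ext φ
  rw [mem_iff_realize hp2 hcp, mem_iff_realize hq2 hcq]
  constructor
  · exact h φ
  · intro hq
    by_contra hp
    have := h φ.not (Formula.realize_not.2 hp)
    exact Formula.realize_not.1 this hq

/-- transfer of a sentence between models of a complete theory -/
lemma transfer_sentence {T : L.Theory} (hc : T.IsComplete)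
    (M N : Theory.ModelType.{u, v, max u v} T) (σ : L.Sentence) (h : M ⊨ σ) : N ⊨ σ := by
  rcases hc.2 σ with h' | h'
  · exact (Theory.models_sentence_iff.1 h') N
  · exact absurd h ((Sentence.realize_not M).1 ((Theory.models_sentence_iff.1 h') M))

/-- existential closure of a one-variable formula -/
noncomputable def exSentence (ζ : L.Formula (Fin 1)) : L.Sentence :=
  Formula.iExs (Fin 1) (ζ.relabel (fun _ : Fin 1 => (Sum.inr 0 : Empty ⊕ Fin 1)))

lemma realize_exSentence {M : Type w} [L.Structure M] {ζ : L.Formula (Fin 1)} :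
    (M ⊨ exSentence ζ) ↔ ∃ x : M, ζ.Realize ![x] := by
  unfold exSentence
  rw [Sentence.Realize, Formula.realize_iExs]
  simp only [Formula.realize_relabel]
  constructor
  · rintro ⟨i, hi⟩
    refine ⟨i 0, ?_⟩
    convert hi using 1
    funext a; fin_cases a; rfl
  · rintro ⟨x, hx⟩
    refine ⟨![x], ?_⟩
    convert hx using 1
    funext a; fin_cases a; rfl

/-- strong minimality specialized to a single parameter in the second slot -/
lemma sm_param {T : L.Theory} (hsm : IsStronglyMinimal T)
    (M : Theory.ModelType.{u, v, max u v} T) (φ : L.Formula (Fin 2)) (c : M) :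
    {x : M | φ.Realize ![x, c]}.Finite ∨ {x : M | ¬ φ.Realize ![x, c]}.Finite := by
  have := hsm M 1 (φ.relabel ![Sum.inl 0, Sum.inr 0]) ![c]
  have key : ∀ x : M, ((φ.relabel ![Sum.inl 0, Sum.inr 0] : L.Formula (Fin 1 ⊕ Fin 1)).Realize
      (Sum.elim ![x] ![c])) ↔ φ.Realize ![x, c] := by
    intro x
    rw [Formula.realize_relabel]
    have : Sum.elim ![x] ![c] ∘ (![Sum.inl 0, Sum.inr 0] : Fin 2 → Fin 1 ⊕ Fin 1) = ![x, c] := by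
      funext j; fin_cases j <;> rfl
    rw [this]
  rcases this with h | h
  · left; convert h using 1; ext x; simp only [mem_setOf_eq]; exact (key x).symm
  · right; convert h using 1; ext x; simp only [mem_setOf_eq]; exact (not_congr (key x)).symm

end Helpers2

section Count

variable {M : Type w}

lemma le_card_of_inj {s : Set M} (hs : s.Finite) {k : ℕ} (f : Fin k → M)
    (hfi : Function.Injective f) (hmem : ∀ i, f i ∈ s) : k ≤ hs.toFinset.card := by
  classical
  have := Finset.card_le_card_of_injOn (s := (Finset.univ : Finset (Fin k)))
    f (fun a _ => hs.mem_toFinset.2 (hmem a)) (hfi.injOn)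
  simpa using this

lemma exists_inj_of_finset (t : Finset M) {k : ℕ} (h : t.card = k) :
    ∃ f : Fin k → M, Function.Injective f ∧ ∀ i, f i ∈ t := by
  refine ⟨fun i => ((t.equivFinOfCardEq h).symm i : M), ?_, fun i => Subtype.coe_prop _⟩
  intro i j hij
  have := Subtype.coe_injective hij
  exact (t.equivFinOfCardEq h).symm.injective this

lemma exists_inj_of_infinite {s : Set M} (hs : s.Infinite) (k : ℕ) :
    ∃ f : Fin k → M, Function.Injective f ∧ ∀ i, f i ∈ s := by
  obtain ⟨t, hts, htc⟩ := hs.exists_subset_card_eq k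
  obtain ⟨f, hfi, hf⟩ := exists_inj_of_finset t htc
  exact ⟨f, hfi, fun i => hts (hf i)⟩

lemma finite_of_no_inj {s : Set M} (k : ℕ)
    (h : ¬ ∃ f : Fin k → M, Function.Injective f ∧ ∀ i, f i ∈ s) : s.Finite := by
  by_contra h'
  exact h (exists_inj_of_infinite h' k)

end Count

section Compl


/-- if `S¹_T(∅)` is infinite, then the set of non-realizers of `r₀` in any model is infinite -/
lemma compl_infinite {T : L.Theory} (hcomplete : T.IsComplete)
    (hS1 : {p : Set (L.Formula (Fin 1)) | IsCompleteOneType T p}.Infinite)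
    {r0 : Set (L.Formula (Fin 1))} (hr0 : IsCompleteOneType T r0)
    (M : Theory.ModelType.{u, v, max u v} T) (a : M) (ha : ∀ φ ∈ r0, φ.Realize ![a])
    {S : Set M} (hS : ∀ y ∈ S, ∀ φ ∈ r0, Formula.Realize φ ![y]) : Sᶜ.Infinite := by
  classical
  by_contra hinfc
  rw [Set.not_infinite] at hinfc
  have hScF := hinfc
  set n := hScF.toFinset.card with hn
  obtain ⟨tps, htsub, htcard⟩ :=
    (hS1.diff (Set.finite_singleton r0)).exists_subset_card_eq (n + 1)
  have hcomp : ∀ p ∈ tps, IsCompleteOneType T p ∧ p ≠ r0 := by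
    intro p hp
    have := htsub hp
    exact ⟨this.1, by simpa using this.2⟩
  have hreal : ∀ p (_ : p ∈ tps), ∃ (Mp : Theory.ModelType.{u, v, max u v} T) (c : Mp),
      ∀ φ ∈ p, φ.Realize ![c] := fun p hp => (hcomp p hp).1.1
  choose MT cc hcc using hreal
  have hsep : ∀ p (hp : p ∈ tps) q (hq : q ∈ tps), p ≠ q →
      ∃ γ : L.Formula (Fin 1), γ.Realize ![cc p hp] ∧ ¬ γ.Realize ![cc q hq] :=
    fun p hp q hq hne =>
      exists_sep (hcomp p hp).1.2 (hcomp q hq).1.2 (hcc p hp) (hcc q hq) hne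
  choose γf hγ1 hγ2 using hsep
  have hE : ∀ p (hp : p ∈ tps), ∃ ε : L.Formula (Fin 1),
      ε.Realize ![cc p hp] ∧ ¬ ε.Realize ![a] :=
    fun p hp => exists_sep (hcomp p hp).1.2 hr0.2 (hcc p hp) ha (hcomp p hp).2
  choose εf hε1 hε2 using hE
  set ζ : ∀ p (_ : p ∈ tps), L.Formula (Fin 1) := fun p hp =>
    εf p hp ⊓ finsetInf (tps.erase p) (fun q =>
      if hq : q ∈ tps ∧ q ≠ p then
        (γf p hp q hq.1 (Ne.symm hq.2)) ⊓ (γf q hq.1 p hp hq.2).not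
      else ⊤) with hζ
  have hζself : ∀ p (hp : p ∈ tps), (ζ p hp).Realize ![cc p hp] := by
    intro p hp
    rw [hζ]
    rw [Formula.realize_inf]
    refine ⟨hε1 p hp, ?_⟩
    refine (realize_finsetInf _ _ _ _).2 fun q hq => ?_
    rw [Finset.mem_erase] at hq
    rw [dif_pos ⟨hq.2, hq.1⟩, BoundedFormula.realize_inf, BoundedFormula.realize_not]
    exact ⟨hγ1 p hp q hq.2 (Ne.symm hq.1), hγ2 q hq.2 p hp hq.1⟩
  have hxex : ∀ p (hp : p ∈ tps), ∃ x : M, (ζ p hp).Realize ![x] := by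
    intro p hp
    have h1 : (MT p hp) ⊨ exSentence (ζ p hp) :=
      realize_exSentence.2 ⟨cc p hp, hζself p hp⟩
    exact realize_exSentence.1 (transfer_sentence hcomplete (MT p hp) M _ h1)
  choose xx hxx using hxex
  have hxS : ∀ p (hp : p ∈ tps), xx p hp ∈ Sᶜ := by
    intro p hp hmem
    have h1 : (εf p hp).not ∈ r0 :=
      (mem_iff_realize hr0.2 ha (εf p hp).not).2 (Formula.realize_not.2 (hε2 p hp))
    have h2 := hS _ hmem _ h1
    rw [Formula.realize_not] at h2
    have := (Formula.realize_inf.1 (hxx p hp)).1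
    exact h2 this
  have hinj : ∀ p (hp : p ∈ tps) q (hq : q ∈ tps), p ≠ q → xx p hp ≠ xx q hq := by
    intro p hp q hq hne heq
    have h1 := (Formula.realize_inf.1 (hxx p hp)).2
    have h2 := (Formula.realize_inf.1 (hxx q hq)).2
    have h1' := (realize_finsetInf _ _ _ _).1 h1 q
      (Finset.mem_erase.2 ⟨Ne.symm hne, hq⟩)
    have h2' := (realize_finsetInf _ _ _ _).1 h2 p
      (Finset.mem_erase.2 ⟨hne, hp⟩)
    rw [dif_pos ⟨hq, Ne.symm hne⟩] at h1'
    rw [dif_pos ⟨hp, hne⟩] at h2'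
    have hpos := (BoundedFormula.realize_inf.1 h1').1
    have hneg := (BoundedFormula.realize_inf.1 h2').2
    rw [BoundedFormula.realize_not] at hneg
    rw [heq] at hpos
    exact hneg hpos
  have hsub : (tps.attach.image (fun z => xx z.1 z.2)) ⊆ hScF.toFinset := by
    intro y hy
    rw [Finset.mem_image] at hy
    obtain ⟨z, _, rfl⟩ := hy
    exact hScF.mem_toFinset.2 (hxS z.1 z.2)
  have hcard : (tps.attach.image (fun z => xx z.1 z.2)).card = n + 1 := by
    rw [Finset.card_image_of_injOn, Finset.card_attach, htcard]
    intro z1 _ z2 _ h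
    by_contra hne
    exact hinj z1.1 z1.2 z2.1 z2.2 (fun hh => hne (Subtype.ext hh)) h
  have := Finset.card_le_card hsub
  rw [hcard, ← hn] at this
  omega

end Compl


/-- If `S¹_T(∅)` is infinite, the semi-isolation relation on the set of realizations of `r₀`
is symmetric. -/
theorem statement8 (T : L.Theory) (hcomplete : T.IsComplete)
    (hinf : ∀ M : Theory.ModelType.{u, v, max u v} T, Infinite M)
    (hsm : IsStronglyMinimal T)
    (hS1 : {p : Set (L.Formula (Fin 1)) | IsCompleteOneType T p}.Infinite)
    (r0 : Set (L.Formula (Fin 1))) (hr0 : IsCompleteOneType T r0)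
    (hr0inf : ∀ φ ∈ r0, ∀ M : Theory.ModelType.{u, v, max u v} T,
      {b : M | φ.Realize ![b]}.Infinite)
    (M : Theory.ModelType.{u, v, max u v} T) (a b : M)
    (ha : RealizesOneType L r0 a) (hb : RealizesOneType L r0 b)
    (hab : SemiIsolatedOver L a b) :
    SemiIsolatedOver L b a := by
  classical
  obtain ⟨φ, hφab, hφ⟩ := hab
  have hmem_a : ∀ ψ, ψ ∈ r0 ↔ ψ.Realize ![a] := mem_iff_realize hr0.2 ha
  have hmem_b : ∀ ψ, ψ ∈ r0 ↔ ψ.Realize ![b] := mem_iff_realize hr0.2 hb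
  have hSrel : ∀ y : M, ((φ.relabel ![1, 0] : L.Formula (Fin 2)).Realize ![y, a]) ↔
      φ.Realize ![a, y] := by
    intro y; rw [Formula.realize_relabel, comp_swap2]
  set S := {y : M | φ.Realize ![a, y]} with hSdef
  have hSr0 : ∀ y ∈ S, ∀ ψ ∈ r0, ψ.Realize ![y] :=
    fun y hy ψ hψ => hφ y hy ψ ((hmem_b ψ).1 hψ)
  have hS : S.Finite := by
    rcases sm_param hsm M (φ.relabel ![1, 0]) a with h | h
    · convert h using 1
      ext y
      simp only [hSdef, mem_setOf_eq]
      exact (hSrel y).symm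
    · exfalso
      have hcompl := compl_infinite hcomplete hS1 hr0 M a ha hSr0
      apply hcompl
      convert h using 1
      ext y
      simp only [mem_compl_iff, hSdef, mem_setOf_eq]
      exact not_congr (hSrel y).symm
  set k := hS.toFinset.card with hk
  set cG := countGe (k + 1) φ with hcG
  have hnca : ¬ cG.Realize ![a] := by
    intro h
    obtain ⟨ys, hinj', hys⟩ := realize_countGe.1 h
    have := le_card_of_inj hS ys hinj' (fun i => hys i)
    omega
  set φstar : L.Formula (Fin 2) := φ ⊓ (cG.relabel (fun _ : Fin 1 => (0 : Fin 2))).not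
    with hφstar
  have hstar : ∀ x y : M, φstar.Realize ![x, y] ↔
      (φ.Realize ![x, y] ∧ ¬ cG.Realize ![x]) := by
    intro x y
    rw [hφstar, Formula.realize_inf, Formula.realize_not, Formula.realize_relabel, comp_const0]
  have hstarab : φstar.Realize ![a, b] := (hstar a b).2 ⟨hφab, hnca⟩
  set A := {x : M | φstar.Realize ![x, b]} with hAdef
  have hA : A.Finite := by
    rcases sm_param hsm M φstar b with h | h
    · exact h
    · exfalso
      set m := h.toFinset.card with hm
      set flip : L.Formula (Fin 2) := φstar.not.relabel ![1, 0] with hflipdef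
      have hflip : ∀ x y : M, flip.Realize ![y, x] ↔ ¬ φstar.Realize ![x, y] := by
        intro x y
        rw [hflipdef, Formula.realize_relabel, comp_swap2, Formula.realize_not]
      set σ := (countGe (m + 1) flip).not with hσdef
      have hσb : σ.Realize ![b] := by
        rw [hσdef, Formula.realize_not]
        intro hcg
        obtain ⟨xs, hinj', hxs⟩ := realize_countGe.1 hcg
        have hmemc : ∀ i, xs i ∈ {x : M | ¬ φstar.Realize ![x, b]} :=
          fun i => (hflip (xs i) b).1 (hxs i)
        have := le_card_of_inj h xs hinj' hmemc
        omega
      have hσr0 : σ ∈ r0 := (hmem_b σ).2 hσb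
      have hσinf := hr0inf σ hσr0 M
      obtain ⟨t, hts, htc⟩ := hσinf.exists_subset_card_eq (k + 1)
      have hfin : ∀ y ∈ (↑t : Set M), {x : M | ¬ φstar.Realize ![x, y]}.Finite := by
        intro y hy
        apply finite_of_no_inj (m + 1)
        rintro ⟨f, hfi, hf⟩
        have hcg : (countGe (m + 1) flip).Realize ![y] :=
          realize_countGe.2 ⟨f, hfi, fun i => (hflip (f i) y).2 (hf i)⟩
        have hσy : σ.Realize ![y] := hts hy
        rw [hσdef, Formula.realize_not] at hσy
        exact hσy hcg
      have hU : (⋃ y ∈ (↑t : Set M), {x : M | ¬ φstar.Realize ![x, y]}).Finite :=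
        Set.Finite.biUnion t.finite_toSet hfin
      haveI := hinf M
      obtain ⟨x0, hx0⟩ := hU.infinite_compl.nonempty
      have hx0' : ∀ y ∈ t, φstar.Realize ![x0, y] := by
        intro y hy
        by_contra hc
        exact hx0 (Set.mem_biUnion (by exact_mod_cast hy) hc)
      have htne : t.Nonempty := Finset.card_pos.1 (by omega)
      obtain ⟨y0, hy0⟩ := htne
      have h1 : ¬ cG.Realize ![x0] := ((hstar x0 y0).1 (hx0' y0 hy0)).2
      obtain ⟨f, hfi, hf⟩ := exists_inj_of_finset t htc
      exact h1 (realize_countGe.2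
        ⟨f, hfi, fun i => ((hstar x0 (f i)).1 (hx0' (f i) (hf i))).1⟩)
  have hbadsub : {c : M | c ∈ A ∧ ∃ ψ : L.Formula (Fin 1),
      ψ.Realize ![a] ∧ ¬ ψ.Realize ![c]} ⊆ A := fun c hc => hc.1
  have hBadF : {c : M | c ∈ A ∧ ∃ ψ : L.Formula (Fin 1),
      ψ.Realize ![a] ∧ ¬ ψ.Realize ![c]}.Finite := hA.subset hbadsub
  have hpick : ∀ c ∈ hBadF.toFinset, ∃ ψ : L.Formula (Fin 1),
      ψ.Realize ![a] ∧ ¬ ψ.Realize ![c] := fun c hc => (hBadF.mem_toFinset.1 hc).2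
  choose Ψ hΨ1 hΨ2 using hpick
  set prune : L.Formula (Fin 1) :=
    finsetInf hBadF.toFinset.attach (fun z => Ψ z.1 z.2) with hprune
  refine ⟨(φstar.relabel ![1, 0]) ⊓ (prune.relabel (fun _ : Fin 1 => (1 : Fin 2))), ?_, ?_⟩
  · rw [Formula.realize_inf, Formula.realize_relabel, comp_swap2,
      Formula.realize_relabel, comp_const1]
    refine ⟨hstarab, ?_⟩
    exact (realize_finsetInf _ _ _ _).2 fun z _ => hΨ1 z.1 z.2
  · intro a' hra' ψ hψa
    rw [Formula.realize_inf, Formula.realize_relabel, comp_swap2,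
      Formula.realize_relabel, comp_const1] at hra'
    obtain ⟨h1, h2⟩ := hra'
    by_contra hc
    have hbad : a' ∈ hBadF.toFinset := hBadF.mem_toFinset.2 ⟨h1, ψ, hψa, hc⟩
    have := (realize_finsetInf _ _ _ _).1 h2 ⟨a', hbad⟩ (Finset.mem_attach _ _)
    exact hΨ2 a' hbad this
end
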